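/- Let P, Q, R, S be A-bounded operators on H. Then ω_𝔸([[P,Q],[R,S]]) ≤ max{ω_A(P), ω_A(S)} + (‖Q‖_A + ‖R‖_A)/2, where ‖T‖_A = sup{‖Tx‖_A : ‖x‖_A = 1}. -/

import Mathlib

open ContinuousLinearMap

/-- The `A`-seminorm of a vector: `‖x‖_A = √⟨Ax, x⟩`. -/
noncomputable def vnormA {H : Type*} [NormedAddCommGroup H] [InnerProductSpace ℂ H]
    (A : H →L[ℂ] H) (x : H) : ℝ :=
  Real.sqrt (RCLike.re (inner ℂ (A x) x : ℂ))

/-- `T` is `A`-bounded, i.e. `T ∈ B_{A^{1/2}}(H)`. -/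
def ABounded {H : Type*} [NormedAddCommGroup H] [InnerProductSpace ℂ H]
    (A T : H →L[ℂ] H) : Prop :=
  ∃ c : ℝ, 0 < c ∧ ∀ x, vnormA A (T x) ≤ c * vnormA A x

/-- The `A`-operator seminorm `‖T‖_A = sup{‖Tx‖_A : ‖x‖_A = 1}`. -/
noncomputable def opNormA {H : Type*} [NormedAddCommGroup H] [InnerProductSpace ℂ H]
    (A T : H →L[ℂ] H) : ℝ :=
  sSup {c : ℝ | ∃ x : H, vnormA A x = 1 ∧ c = vnormA A (T x)}

/-- The `A`-numerical radius `ω_A(T) = sup{|⟨ATx, x⟩| : ‖x‖_A = 1}`. -/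
noncomputable def wA {H : Type*} [NormedAddCommGroup H] [InnerProductSpace ℂ H]
    (A T : H →L[ℂ] H) : ℝ :=
  sSup {c : ℝ | ∃ x : H, vnormA A x = 1 ∧ c = ‖(inner ℂ (A (T x)) x : ℂ)‖}

/-- `Ts` is the reduced (Douglas) solution of `AX = T*A`, i.e. `Ts = T^{♯_A}`. -/
def IsReducedAdjoint {H : Type*} [NormedAddCommGroup H] [InnerProductSpace ℂ H]
    [CompleteSpace H] (A T Ts : H →L[ℂ] H) : Prop :=
  A ∘L Ts = (ContinuousLinearMap.adjoint T) ∘L A ∧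
    ∀ y, Ts y ∈ closure (Set.range A)

/-- The `2 × 2` operator matrix `[[P, Q], [R, S]]` acting on `H ⊕ H` (with the `ℓ²` product
inner product). -/
noncomputable def blk {H : Type*} [NormedAddCommGroup H] [InnerProductSpace ℂ H]
    (P Q R S : H →L[ℂ] H) : WithLp 2 (H × H) →L[ℂ] WithLp 2 (H × H) :=
  letI e := (WithLp.prodContinuousLinearEquiv 2 ℂ H H)
  (e.symm.toContinuousLinearMap) ∘L
    ((P.comp (fst ℂ H H) + Q.comp (snd ℂ H H)).prod
      (R.comp (fst ℂ H H) + S.comp (snd ℂ H H))) ∘L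
    (e.toContinuousLinearMap)

/-- `𝔸 = diag(A, A)` on `H ⊕ H`. -/
noncomputable def AA {H : Type*} [NormedAddCommGroup H] [InnerProductSpace ℂ H]
    (A : H →L[ℂ] H) : WithLp 2 (H × H) →L[ℂ] WithLp 2 (H × H) :=
  blk A 0 0 A

section aux
set_option linter.unusedSectionVars false
set_option linter.unusedVariables false
variable {H : Type*} [NormedAddCommGroup H] [InnerProductSpace ℂ H] [CompleteSpace H]
variable (A : H →L[ℂ] H)

/-- The semi-inner-product `⟨x, y⟩_A = ⟨Ax, y⟩` as a `PreInnerProductSpace.Core`. -/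
noncomputable def coreA (hA : A.IsPositive) : PreInnerProductSpace.Core ℂ H where
  inner x y := inner ℂ (A x) y
  conj_inner_symm x y := by
    show (starRingEnd ℂ) (inner ℂ (A y) x) = inner ℂ (A x) y
    rw [inner_conj_symm]
    exact ((isSelfAdjoint_iff_isSymmetric.mp hA.isSelfAdjoint) x y).symm
  re_inner_nonneg x := (RCLike.nonneg_iff.mp (hA.inner_nonneg_left x)).1
  add_left x y z := by simp [inner_add_left]
  smul_left x y r := by simp [inner_smul_left]; ring

lemma vnormA_nonneg (x : H) : 0 ≤ vnormA A x := Real.sqrt_nonneg _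

lemma vnormA_sq (hA : A.IsPositive) (x : H) :
    vnormA A x ^ 2 = RCLike.re (inner ℂ (A x) x : ℂ) := Real.sq_sqrt (RCLike.nonneg_iff.mp (hA.inner_nonneg_left x)).1

/-- Cauchy–Schwarz for the `A`-semi-inner-product. -/
lemma csA (hA : A.IsPositive) (x y : H) :
    ‖(inner ℂ (A x) y : ℂ)‖ ≤ vnormA A x * vnormA A y := by
  have h := @InnerProductSpace.Core.inner_mul_inner_self_le ℂ H _ _ _ (coreA A hA) x y
  have hsymm := @InnerProductSpace.Core.norm_inner_symm ℂ H _ _ _ (coreA A hA) x y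
  have e1 : (@inner ℂ H (coreA A hA).toInner x y) = (inner ℂ (A x) y : ℂ) := rfl
  have e2 : (@inner ℂ H (coreA A hA).toInner x x) = (inner ℂ (A x) x : ℂ) := rfl
  have e3 : (@inner ℂ H (coreA A hA).toInner y y) = (inner ℂ (A y) y : ℂ) := rfl
  rw [e1, e2, e3] at h
  rw [e1] at hsymm
  rw [← hsymm] at h
  have hb := vnormA_nonneg A x
  have hc := vnormA_nonneg A y
  rw [← vnormA_sq A hA, ← vnormA_sq A hA] at h
  nlinarith [norm_nonneg (inner ℂ (A x) y : ℂ), mul_nonneg hb hc]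

lemma vnormA_real_smul (t : ℝ) (x : H) :
    vnormA A ((t : ℂ) • x) = |t| * vnormA A x := by
  unfold vnormA
  have h : (inner ℂ (A ((t:ℂ) • x)) ((t:ℂ) • x) : ℂ) = ((t^2 : ℝ) : ℂ) * inner ℂ (A x) x := by
    rw [map_smul, inner_smul_left, inner_smul_right, Complex.conj_ofReal]
    push_cast; ring
  rw [h]
  simp only [RCLike.re_to_complex, Complex.re_ofReal_mul]
  rw [Real.sqrt_mul (sq_nonneg t), Real.sqrt_sq_eq_abs]

lemma wA_nonneg (T : H →L[ℂ] H) : 0 ≤ wA A T := by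
  apply Real.sSup_nonneg
  rintro c ⟨x, -, rfl⟩
  exact norm_nonneg _

lemma opNormA_nonneg (T : H →L[ℂ] H) : 0 ≤ opNormA A T := by
  apply Real.sSup_nonneg
  rintro c ⟨x, -, rfl⟩
  exact Real.sqrt_nonneg _

lemma wA_quad (hA : A.IsPositive) {T : H →L[ℂ] H} (hT : ABounded A T) (u : H) :
    ‖(inner ℂ (A (T u)) u : ℂ)‖ ≤ wA A T * vnormA A u ^ 2 := by
  obtain ⟨c, hc, hcb⟩ := hT
  rcases (vnormA_nonneg A u).eq_or_lt with h0 | hpos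
  · have hu0 : vnormA A u = 0 := h0.symm
    have h1 := csA A hA (T u) u
    rw [hu0, mul_zero] at h1
    rw [hu0]
    simpa using h1
  · set a := vnormA A u with ha_def
    set u' := ((a⁻¹ : ℝ) : ℂ) • u with hu'_def
    have hu' : vnormA A u' = 1 := by
      rw [hu'_def, vnormA_real_smul, abs_of_pos (inv_pos.mpr hpos), inv_mul_cancel₀ hpos.ne']
    have hbdd : BddAbove {r : ℝ | ∃ x : H, vnormA A x = 1 ∧
        r = ‖(inner ℂ (A (T x)) x : ℂ)‖} := by
      refine ⟨c, ?_⟩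
      rintro r ⟨x, hx, rfl⟩
      calc ‖(inner ℂ (A (T x)) x : ℂ)‖ ≤ vnormA A (T x) * vnormA A x :=
            csA A hA (T x) x
        _ ≤ (c * vnormA A x) * vnormA A x :=
            mul_le_mul_of_nonneg_right (hcb x) (vnormA_nonneg A x)
        _ = c := by rw [hx]; ring
    have hle : ‖(inner ℂ (A (T u')) u' : ℂ)‖ ≤ wA A T :=
      le_csSup hbdd ⟨u', hu', rfl⟩
    have hval : (inner ℂ (A (T u')) u' : ℂ) = ((a⁻¹ ^ 2 : ℝ) : ℂ) * inner ℂ (A (T u)) u := by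
      rw [hu'_def, map_smul, map_smul, inner_smul_left, inner_smul_right, Complex.conj_ofReal]
      push_cast; ring
    have habs : ‖(inner ℂ (A (T u')) u' : ℂ)‖
        = a⁻¹ ^ 2 * ‖(inner ℂ (A (T u)) u : ℂ)‖ := by
      rw [hval, norm_mul, Complex.norm_real, Real.norm_eq_abs, abs_of_nonneg (by positivity)]
    rw [habs] at hle
    have h2 := mul_le_mul_of_nonneg_left hle (sq_nonneg a)
    calc ‖(inner ℂ (A (T u)) u : ℂ)‖
        = a ^ 2 * (a⁻¹ ^ 2 * ‖(inner ℂ (A (T u)) u : ℂ)‖) := by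
          field_simp
      _ ≤ a ^ 2 * wA A T := h2
      _ = wA A T * a ^ 2 := mul_comm _ _

lemma opNormA_quad (hA : A.IsPositive) {T : H →L[ℂ] H} (hT : ABounded A T) (u : H) :
    vnormA A (T u) ≤ opNormA A T * vnormA A u := by
  obtain ⟨c, hc, hcb⟩ := hT
  rcases (vnormA_nonneg A u).eq_or_lt with h0 | hpos
  · have hu0 : vnormA A u = 0 := h0.symm
    have h1 := hcb u
    rw [hu0, mul_zero] at h1
    rw [hu0, mul_zero]
    exact h1
  · set a := vnormA A u with ha_def
    set u' := ((a⁻¹ : ℝ) : ℂ) • u with hu'_def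
    have hu' : vnormA A u' = 1 := by
      rw [hu'_def, vnormA_real_smul, abs_of_pos (inv_pos.mpr hpos), inv_mul_cancel₀ hpos.ne']
    have hbdd : BddAbove {r : ℝ | ∃ x : H, vnormA A x = 1 ∧ r = vnormA A (T x)} := by
      refine ⟨c, ?_⟩
      rintro r ⟨x, hx, rfl⟩
      calc vnormA A (T x) ≤ c * vnormA A x := hcb x
        _ = c := by rw [hx, mul_one]
    have hle : vnormA A (T u') ≤ opNormA A T := le_csSup hbdd ⟨u', hu', rfl⟩
    have habs : vnormA A (T u') = a⁻¹ * vnormA A (T u) := by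
      rw [hu'_def, map_smul, vnormA_real_smul, abs_of_pos (inv_pos.mpr hpos)]
    rw [habs] at hle
    have h2 := mul_le_mul_of_nonneg_left hle hpos.le
    calc vnormA A (T u) = a * (a⁻¹ * vnormA A (T u)) := by field_simp
      _ ≤ a * opNormA A T := h2
      _ = opNormA A T * a := mul_comm _ _

end aux

theorem stmt3 {H : Type*} [NormedAddCommGroup H] [InnerProductSpace ℂ H] [CompleteSpace H]
    (A : H →L[ℂ] H) (hA : A.IsPositive)
    (P Q R S : H →L[ℂ] H) (hP : ABounded A P) (hQ : ABounded A Q)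
    (hR : ABounded A R) (hS : ABounded A S) :
    wA (AA A) (blk P Q R S) ≤
      max (wA A P) (wA A S) + (opNormA A Q + opNormA A R) / 2 := by
  have hMn : 0 ≤ max (wA A P) (wA A S) := le_trans (wA_nonneg A P) (le_max_left _ _)
  have hQn := opNormA_nonneg A Q
  have hRn := opNormA_nonneg A R
  apply Real.sSup_le
  · rintro r ⟨x, hx, rfl⟩
    set u := x.fst with hu_def
    set v := x.snd with hv_def
    set a := vnormA A u with ha_def
    set b := vnormA A v with hb_def
    have ha := vnormA_nonneg A u
    have hb := vnormA_nonneg A v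
    -- the normalization: a² + b² = 1
    have hAAx : (inner ℂ ((AA A) x) x : ℂ) = inner ℂ (A u) u + inner ℂ (A v) v := by
      rw [show (AA A) = blk A 0 0 A from rfl, WithLp.prod_inner_apply]
      have h1 : (blk A 0 0 A x).fst = A u + (0 : H →L[ℂ] H) v := rfl
      have h2 : (blk A 0 0 A x).snd = (0 : H →L[ℂ] H) u + A v := rfl
      change inner ℂ ((blk A 0 0 A) x).fst u + inner ℂ ((blk A 0 0 A) x).snd v = _
      rw [h1, h2]
      simp
    have hsum : RCLike.re (inner ℂ ((AA A) x) x : ℂ)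
        = RCLike.re (inner ℂ (A u) u : ℂ) + RCLike.re (inner ℂ (A v) v : ℂ) := by
      rw [hAAx, map_add]
    have hone : RCLike.re (inner ℂ ((AA A) x) x : ℂ) = 1 := by
      have := hx
      unfold vnormA at this
      rwa [Real.sqrt_eq_one] at this
    have hab : a ^ 2 + b ^ 2 = 1 := by
      rw [ha_def, hb_def, vnormA_sq A hA, vnormA_sq A hA, ← hsum, hone]
    -- decompose the numerical form
    have hblk : (inner ℂ ((AA A) ((blk P Q R S) x)) x : ℂ)
        = inner ℂ (A (P u)) u + inner ℂ (A (Q v)) u + inner ℂ (A (R u)) v + inner ℂ (A (S v)) v := by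
      rw [show (AA A) = blk A 0 0 A from rfl, WithLp.prod_inner_apply]
      have h1 : (blk A 0 0 A ((blk P Q R S) x)).fst
          = A (P u + Q v) + (0 : H →L[ℂ] H) ((blk P Q R S x).snd) := rfl
      have h2 : (blk A 0 0 A ((blk P Q R S) x)).snd
          = (0 : H →L[ℂ] H) ((blk P Q R S x).fst) + A (R u + S v) := rfl
      change inner ℂ ((blk A 0 0 A) ((blk P Q R S) x)).fst u
        + inner ℂ ((blk A 0 0 A) ((blk P Q R S) x)).snd v = _
      rw [h1, h2]
      simp [map_add, inner_add_left]
      ring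
    have htri : ‖(inner ℂ ((AA A) ((blk P Q R S) x)) x : ℂ)‖
        ≤ ‖(inner ℂ (A (P u)) u : ℂ)‖ + ‖(inner ℂ (A (Q v)) u : ℂ)‖
          + ‖(inner ℂ (A (R u)) v : ℂ)‖ + ‖(inner ℂ (A (S v)) v : ℂ)‖ := by
      rw [hblk]
      calc ‖(inner ℂ (A (P u)) u + inner ℂ (A (Q v)) u + inner ℂ (A (R u)) v
            + inner ℂ (A (S v)) v : ℂ)‖
          ≤ ‖(inner ℂ (A (P u)) u + inner ℂ (A (Q v)) u + inner ℂ (A (R u)) v : ℂ)‖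
            + ‖(inner ℂ (A (S v)) v : ℂ)‖ := norm_add_le _ _
        _ ≤ ‖(inner ℂ (A (P u)) u + inner ℂ (A (Q v)) u : ℂ)‖
            + ‖(inner ℂ (A (R u)) v : ℂ)‖
            + ‖(inner ℂ (A (S v)) v : ℂ)‖ := by
              gcongr
              exact norm_add_le _ _
        _ ≤ _ := by
              gcongr
              exact norm_add_le _ _
    have h1 : ‖(inner ℂ (A (P u)) u : ℂ)‖ ≤ wA A P * a ^ 2 := wA_quad A hA hP u
    have h4 : ‖(inner ℂ (A (S v)) v : ℂ)‖ ≤ wA A S * b ^ 2 := wA_quad A hA hS v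
    have h2 : ‖(inner ℂ (A (Q v)) u : ℂ)‖ ≤ (opNormA A Q * b) * a :=
      le_trans (csA A hA (Q v) u)
        (mul_le_mul_of_nonneg_right (opNormA_quad A hA hQ v) ha)
    have h3 : ‖(inner ℂ (A (R u)) v : ℂ)‖ ≤ (opNormA A R * a) * b :=
      le_trans (csA A hA (R u) v)
        (mul_le_mul_of_nonneg_right (opNormA_quad A hA hR u) hb)
    have hwP : wA A P ≤ max (wA A P) (wA A S) := le_max_left _ _
    have hwS : wA A S ≤ max (wA A P) (wA A S) := le_max_right _ _
    nlinarith [sq_nonneg (a - b), sq_nonneg a, sq_nonneg b,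
      mul_nonneg (sub_nonneg.mpr hwP) (sq_nonneg a),
      mul_nonneg (sub_nonneg.mpr hwS) (sq_nonneg b),
      mul_nonneg hQn (mul_nonneg hb ha), mul_nonneg hRn (mul_nonneg ha hb),
      mul_nonneg hQn (sq_nonneg (a - b)), mul_nonneg hRn (sq_nonneg (a - b))]
  · linarith
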